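/- Let Ψ : M → N be a surjective monoid morphism between abelian topological monoids such that Ψ is proper and the multiplication of M is proper. Then the multiplication map of N is proper. -/

import Mathlib

/-- if `Ψ : M → N` is a surjective proper monoid morphism between abelian
topological monoids and the addition of `M` is a proper map, then the addition of `N`
is a proper map. -/
theorem proper_mul_of_proper_surjective {M N : Type*}
    [TopologicalSpace M] [TopologicalSpace N]
    [AddCommMonoid M] [AddCommMonoid N]
    [ContinuousAdd M] [ContinuousAdd N]
    [T2Space M] [T2Space N] [LocallyCompactSpace M] [LocallyCompactSpace N]
    (Ψ : M →+ N) (hsurj : Function.Surjective Ψ) (hprop : IsProperMap (Ψ : M → N))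
    (hmulM : IsProperMap (fun p : M × M => p.1 + p.2)) :
    IsProperMap (fun p : N × N => p.1 + p.2) := by
  have hcomp : IsProperMap ((fun p : N × N => p.1 + p.2) ∘ Prod.map (Ψ : M → N) Ψ) := by
    have : ((fun p : N × N => p.1 + p.2) ∘ Prod.map (Ψ : M → N) Ψ)
        = (Ψ : M → N) ∘ (fun p : M × M => p.1 + p.2) := by
      ext p; simp [Prod.map, map_add]
    rw [this]
    exact hprop.comp hmulM
  exact isProperMap_of_comp_of_surj (hprop.continuous.prodMap hprop.continuous)
    (continuous_add) hcomp (hsurj.prodMap hsurj)
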